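/- Let d ≥ 1, 1 ≤ s ≤ d, γ > 1, λ > 0, κ > 0, and set c₀ = (γ+1)/(γ−1). Let Ĉ be a real d×d symmetric positive semidefinite matrix and ε a real d×d matrix such that: (i) for every u in the cone C(s,c₀), uᵀĈu ≥ κ²·‖u‖₂²; and (ii) every entry of ε has absolute value at most λ/γ. Let A₀ be a row-s-sparse d×d matrix and let Â be a minimizer over d×d matrices of L(A) = tr(Aᵀε) + ½·tr((A−A₀)Ĉ(A−A₀)ᵀ) + λ·|A|₁. Then √(tr((Â−A₀)Ĉ(Â−A₀)ᵀ)) ≤ ((1+γ)/(γκ))·λ·√(d·s). -/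

import Mathlib

open Matrix

/-- Entrywise ℓ¹ norm of a matrix. -/
noncomputable def matL1 {d : ℕ} (M : Matrix (Fin d) (Fin d) ℝ) : ℝ :=
  ∑ i, ∑ j, |M i j|

/-- The Lasso objective `L(A) = tr(Aᵀ ε) + ½ tr((A - A₀) Ĉ (A - A₀)ᵀ) + λ |A|₁`. -/
noncomputable def lassoObj {d : ℕ} (Chat eps A₀ : Matrix (Fin d) (Fin d) ℝ) (lam : ℝ)
    (A : Matrix (Fin d) (Fin d) ℝ) : ℝ :=
  (Aᵀ * eps).trace + (1 / 2) * ((A - A₀) * Chat * (A - A₀)ᵀ).trace + lam * matL1 A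

/-- The cone `C(s, c₀)`: vectors whose ℓ¹ norm is at most `(1 + c₀)` times the ℓ¹ norm
of their `s` largest (in absolute value) entries. -/
def inCone {d : ℕ} (s : ℕ) (c₀ : ℝ) (u : Fin d → ℝ) : Prop :=
  ∃ I : Finset (Fin d), I.card = s ∧ (∀ i ∈ I, ∀ j ∉ I, |u j| ≤ |u i|) ∧
    ∑ j, |u j| ≤ (1 + c₀) * ∑ i ∈ I, |u i|

/-- A matrix is row-`s`-sparse if every row has at most `s` nonzero entries. -/
def rowSparse {d : ℕ} (s : ℕ) (A : Matrix (Fin d) (Fin d) ℝ) : Prop :=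
  ∀ i, {j | A i j ≠ 0}.ncard ≤ s

lemma exists_top {d : ℕ} (s : ℕ) (hsd : s ≤ d) (u : Fin d → ℝ) :
    ∃ I : Finset (Fin d), I.card = s ∧ (∀ i ∈ I, ∀ j ∉ I, |u j| ≤ |u i|) ∧
      ∀ J : Finset (Fin d), J.card ≤ s → ∑ j ∈ J, |u j| ≤ ∑ i ∈ I, |u i| := by
  have hd : s ≤ (Finset.univ : Finset (Fin d)).card := by simpa using hsd
  have hne : ((Finset.univ : Finset (Fin d)).powersetCard s).Nonempty :=
    Finset.powersetCard_nonempty.2 hd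
  obtain ⟨I, hI, hImax⟩ := Finset.exists_max_image _ (fun J => ∑ i ∈ J, |u i|) hne
  have hIcard : I.card = s := (Finset.mem_powersetCard.1 hI).2
  refine ⟨I, hIcard, ?_, ?_⟩
  · intro i hi j hj
    by_contra h
    push_neg at h
    have hjI' : j ∉ I.erase i := fun hmem => hj (Finset.mem_of_mem_erase hmem)
    have h1s : 1 ≤ I.card := Finset.card_pos.2 ⟨i, hi⟩
    have hcard : (insert j (I.erase i)).card = s := by
      rw [Finset.card_insert_of_notMem hjI', Finset.card_erase_of_mem hi]
      omega
    have hle := hImax (insert j (I.erase i))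
      (Finset.mem_powersetCard.2 ⟨Finset.subset_univ _, hcard⟩)
    have hsum : ∑ k ∈ insert j (I.erase i), |u k| = ∑ k ∈ I, |u k| - |u i| + |u j| := by
      rw [Finset.sum_insert hjI', Finset.sum_erase_eq_sub hi]; ring
    simp only [hsum] at hle
    linarith
  · intro J hJ
    obtain ⟨J', hJJ', -, hJ'card⟩ :=
      Finset.exists_subsuperset_card_eq (Finset.subset_univ J) hJ hd
    calc ∑ j ∈ J, |u j| ≤ ∑ j ∈ J', |u j| :=
          Finset.sum_le_sum_of_subset_of_nonneg hJJ' (fun _ _ _ => abs_nonneg _)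
      _ ≤ ∑ i ∈ I, |u i| :=
          hImax J' (Finset.mem_powersetCard.2 ⟨Finset.subset_univ _, hJ'card⟩)

lemma basic_ineq {d : ℕ} (Chat eps A₀ Ahat : Matrix (Fin d) (Fin d) ℝ)
    (lam : ℝ) (hlam : 0 ≤ lam)
    (hmin : ∀ A : Matrix (Fin d) (Fin d) ℝ,
      lassoObj Chat eps A₀ lam Ahat ≤ lassoObj Chat eps A₀ lam A) :
    ((Ahat - A₀) * Chat * (Ahat - A₀)ᵀ).trace ≤
      ((A₀ - Ahat)ᵀ * eps).trace + lam * (matL1 A₀ - matL1 Ahat) := by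
  set Q := ((Ahat - A₀) * Chat * (Ahat - A₀)ᵀ).trace with hQ
  set R := ((A₀ - Ahat)ᵀ * eps).trace + lam * (matL1 A₀ - matL1 Ahat) with hR
  have key : ∀ t : ℝ, 0 < t → t ≤ 1 → (1 - t / 2) * Q ≤ R := by
    intro t ht ht1
    have h := hmin (Ahat + t • (A₀ - Ahat))
    unfold lassoObj at h
    have hA : Ahat + t • (A₀ - Ahat) - A₀ = (1 - t) • (Ahat - A₀) := by
      ext i j
      simp only [Matrix.sub_apply, Matrix.add_apply, Matrix.smul_apply, smul_eq_mul]
      ring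
    have htr1 : ((Ahat + t • (A₀ - Ahat))ᵀ * eps).trace
        = (Ahatᵀ * eps).trace + t * ((A₀ - Ahat)ᵀ * eps).trace := by
      rw [Matrix.transpose_add, Matrix.add_mul, Matrix.trace_add, Matrix.transpose_smul,
        Matrix.smul_mul, Matrix.trace_smul, smul_eq_mul]
    have htr2 : ((Ahat + t • (A₀ - Ahat) - A₀) * Chat * (Ahat + t • (A₀ - Ahat) - A₀)ᵀ).trace
        = (1 - t) ^ 2 * Q := by
      rw [hA, Matrix.transpose_smul, Matrix.smul_mul, Matrix.smul_mul, Matrix.mul_smul,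
        Matrix.trace_smul, Matrix.trace_smul, smul_eq_mul, smul_eq_mul, hQ]
      ring
    have hL1 : matL1 (Ahat + t • (A₀ - Ahat)) ≤ (1 - t) * matL1 Ahat + t * matL1 A₀ := by
      unfold matL1
      rw [Finset.mul_sum, Finset.mul_sum, ← Finset.sum_add_distrib]
      refine Finset.sum_le_sum fun i _ => ?_
      rw [Finset.mul_sum, Finset.mul_sum, ← Finset.sum_add_distrib]
      refine Finset.sum_le_sum fun j _ => ?_
      have he : (Ahat + t • (A₀ - Ahat)) i j = (1 - t) * Ahat i j + t * A₀ i j := by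
        simp only [Matrix.add_apply, Matrix.smul_apply, Matrix.sub_apply, smul_eq_mul]; ring
      rw [he]
      calc |(1 - t) * Ahat i j + t * A₀ i j|
          ≤ |(1 - t) * Ahat i j| + |t * A₀ i j| := abs_add_le _ _
        _ = (1 - t) * |Ahat i j| + t * |A₀ i j| := by
            rw [abs_mul, abs_mul, abs_of_nonneg (by linarith), abs_of_nonneg ht.le]
    rw [htr1, htr2, ← hQ] at h
    have hml := mul_le_mul_of_nonneg_left hL1 hlam
    have hkey : t * ((1 - t / 2) * Q) ≤ t * R := by rw [hR]; nlinarith [h, hml]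
    exact le_of_mul_le_mul_left hkey ht
  have h1 := key 1 one_pos le_rfl
  by_contra hcon
  push_neg at hcon
  have hQpos : 0 < Q := by nlinarith
  have ht : 0 < (Q - R) / Q := div_pos (by linarith) hQpos
  have ht1 : (Q - R) / Q ≤ 1 := by
    rw [div_le_one hQpos]; nlinarith
  have h2 := key _ ht ht1
  have h3 : (1 - (Q - R) / Q / 2) * Q = Q - (Q - R) / 2 := by
    field_simp
  rw [h3] at h2
  linarith

set_option maxHeartbeats 1600000 in
/-- empirical-norm error bound for the Lasso. -/
theorem stmt_8 (d s : ℕ) (hd : 1 ≤ d) (hs : 1 ≤ s) (hsd : s ≤ d)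
    (γ lam κ : ℝ) (hγ : 1 < γ) (hlam : 0 < lam) (hκ : 0 < κ)
    (c₀ : ℝ) (hc₀ : c₀ = (γ + 1) / (γ - 1))
    (Chat eps : Matrix (Fin d) (Fin d) ℝ) (hC : Chat.PosSemidef)
    (hRE : ∀ u : Fin d → ℝ, inCone s c₀ u → κ ^ 2 * ∑ i, u i ^ 2 ≤ u ⬝ᵥ Chat *ᵥ u)
    (heps : ∀ i j, |eps i j| ≤ lam / γ)
    (A₀ : Matrix (Fin d) (Fin d) ℝ) (hA₀ : rowSparse s A₀)
    (Ahat : Matrix (Fin d) (Fin d) ℝ)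
    (hmin : ∀ A : Matrix (Fin d) (Fin d) ℝ,
      lassoObj Chat eps A₀ lam Ahat ≤ lassoObj Chat eps A₀ lam A) :
    Real.sqrt (((Ahat - A₀) * Chat * (Ahat - A₀)ᵀ).trace) ≤
      (1 + γ) / (γ * κ) * lam * Real.sqrt (d * s) := by
  classical
  have hγ0 : (0:ℝ) < γ := by linarith
  set Δ : Matrix (Fin d) (Fin d) ℝ := Ahat - A₀ with hΔ
  set q : Fin d → ℝ := fun i => (Δ i) ⬝ᵥ Chat *ᵥ (Δ i) with hqdef
  have hq0 : ∀ i, 0 ≤ q i := fun i => by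
    have := hC.dotProduct_mulVec_nonneg (Δ i)
    simpa using this
  have hQsum : ((Ahat - A₀) * Chat * (Ahat - A₀)ᵀ).trace = ∑ i, q i := by
    rw [← hΔ]
    simp only [hqdef, Matrix.trace, Matrix.diag_apply, Matrix.mul_apply,
      Matrix.transpose_apply, dotProduct, Matrix.mulVec, Finset.sum_mul, Finset.mul_sum]
    refine Finset.sum_congr rfl fun i _ => ?_
    rw [Finset.sum_comm]
    exact Finset.sum_congr rfl fun j _ => Finset.sum_congr rfl fun k _ => by ring
  set Q := ∑ i, q i with hQdef
  have hQ0 : 0 ≤ Q := Finset.sum_nonneg fun i _ => hq0 i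
  -- supports
  set S : Fin d → Finset (Fin d) := fun i => Finset.univ.filter (fun j => A₀ i j ≠ 0) with hSdef
  have hScard : ∀ i, (S i).card ≤ s := by
    intro i
    have h1 : {j | A₀ i j ≠ 0} = ↑(S i) := by ext j; simp [hSdef]
    have := hA₀ i
    rwa [h1, Set.ncard_coe_finset] at this
  set a : Fin d → ℝ := fun i => ∑ j ∈ S i, |Δ i j| with hadef
  set b : Fin d → ℝ := fun i => ∑ j ∈ (S i)ᶜ, |Δ i j| with hbdef
  have ha0 : ∀ i, 0 ≤ a i := fun i => Finset.sum_nonneg fun _ _ => abs_nonneg _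
  have hb0 : ∀ i, 0 ≤ b i := fun i => Finset.sum_nonneg fun _ _ => abs_nonneg _
  have hab : ∀ i, a i + b i = ∑ j, |Δ i j| := fun i =>
    Finset.sum_add_sum_compl (S i) _
  -- basic inequality
  have hbase := basic_ineq Chat eps A₀ Ahat lam hlam.le hmin
  rw [hQsum] at hbase
  -- bound the epsilon term
  have hE : ((A₀ - Ahat)ᵀ * eps).trace ≤ lam / γ * ∑ i, (a i + b i) := by
    have h1 : ((A₀ - Ahat)ᵀ * eps).trace = ∑ i, ∑ j, (A₀ i j - Ahat i j) * eps i j := by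
      simp only [Matrix.trace, Matrix.diag_apply, Matrix.mul_apply, Matrix.transpose_apply,
        Matrix.sub_apply]
      rw [Finset.sum_comm]
    rw [h1]
    calc ∑ i, ∑ j, (A₀ i j - Ahat i j) * eps i j
        ≤ ∑ i, ∑ j, |Δ i j| * (lam / γ) := by
          refine Finset.sum_le_sum fun i _ => Finset.sum_le_sum fun j _ => ?_
          calc (A₀ i j - Ahat i j) * eps i j ≤ |(A₀ i j - Ahat i j) * eps i j| := le_abs_self _
            _ = |Δ i j| * |eps i j| := by rw [abs_mul, hΔ]; simp [Matrix.sub_apply, abs_sub_comm]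
            _ ≤ |Δ i j| * (lam / γ) := mul_le_mul_of_nonneg_left (heps i j) (abs_nonneg _)
      _ = lam / γ * ∑ i, (a i + b i) := by
          rw [Finset.mul_sum]
          refine Finset.sum_congr rfl fun i _ => ?_
          rw [hab i, ← Finset.sum_mul, mul_comm]
  -- bound the l1 term
  have hL1 : matL1 A₀ - matL1 Ahat ≤ ∑ i, (a i - b i) := by
    unfold matL1
    rw [← Finset.sum_sub_distrib]
    refine Finset.sum_le_sum fun i _ => ?_
    rw [← Finset.sum_sub_distrib, ← Finset.sum_add_sum_compl (S i) (fun j => |A₀ i j| - |Ahat i j|)]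
    have h2 : ∑ j ∈ S i, (|A₀ i j| - |Ahat i j|) ≤ a i :=
      Finset.sum_le_sum fun j _ => by
        calc |A₀ i j| - |Ahat i j| ≤ |A₀ i j - Ahat i j| := abs_sub_abs_le_abs_sub _ _
          _ = |Δ i j| := by rw [hΔ]; simp [Matrix.sub_apply, abs_sub_comm]
    have h3 : ∑ j ∈ (S i)ᶜ, (|A₀ i j| - |Ahat i j|) = - b i := by
      rw [hbdef, ← Finset.sum_neg_distrib]
      refine Finset.sum_congr rfl fun j hj => ?_
      have hA0 : A₀ i j = 0 := by
        simp only [hSdef, Finset.mem_compl, Finset.mem_filter, Finset.mem_univ, true_and,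
          not_not] at hj
        exact hj
      rw [hΔ]
      simp [Matrix.sub_apply, hA0]
    rw [h3]
    linarith [h2]
  -- combine
  have hmain : Q ≤ ∑ i, (lam / γ * (a i + b i) + lam * (a i - b i)) := by
    rw [Finset.sum_add_distrib, ← Finset.mul_sum, ← Finset.mul_sum]
    have := mul_le_mul_of_nonneg_left hL1 hlam.le
    calc Q ≤ ((A₀ - Ahat)ᵀ * eps).trace + lam * (matL1 A₀ - matL1 Ahat) := hbase
      _ ≤ lam / γ * ∑ i, (a i + b i) + lam * ∑ i, (a i - b i) := by linarith [hE, this]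
  -- per-row bound
  set c : ℝ := (1 + γ) / (γ * κ) * lam with hcdef
  have hc0 : 0 ≤ c := by positivity
  have hrow : ∀ i, lam / γ * (a i + b i) + lam * (a i - b i)
      ≤ c * Real.sqrt s * Real.sqrt (q i) := by
    intro i
    by_cases hcase : lam / γ * (a i + b i) + lam * (a i - b i) ≤ 0
    · exact hcase.trans (by positivity)
    push_neg at hcase
    -- cone membership
    obtain ⟨I, hIc, hIord, hImax⟩ := exists_top s hsd (Δ i)
    have hba : b i ≤ c₀ * a i := by
      have h1 : 0 < γ * (lam / γ * (a i + b i) + lam * (a i - b i)) := mul_pos hγ0 hcase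
      have h2 : γ * (lam / γ * (a i + b i) + lam * (a i - b i))
          = lam * ((a i + b i) + γ * (a i - b i)) := by
        field_simp
      rw [h2] at h1
      have hx : 0 < (a i + b i) + γ * (a i - b i) := by
        by_contra hx
        push_neg at hx
        nlinarith [h1]
      rw [hc₀, div_mul_eq_mul_div, le_div_iff₀ (by linarith)]
      nlinarith [hx]
    have hcone : inCone s c₀ (Δ i) := by
      refine ⟨I, hIc, hIord, ?_⟩
      have hc₀0 : 0 ≤ 1 + c₀ := by
        have : 0 < (γ + 1) / (γ - 1) := div_pos (by linarith) (by linarith)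
        rw [hc₀]; linarith
      calc ∑ j, |Δ i j| = a i + b i := (hab i).symm
        _ ≤ (1 + c₀) * a i := by nlinarith [hba]
        _ ≤ (1 + c₀) * ∑ j ∈ I, |Δ i j| :=
            mul_le_mul_of_nonneg_left (hImax (S i) (hScard i)) hc₀0
    have hre := hRE (Δ i) hcone
    -- Cauchy-Schwarz on the support
    have hCS := Real.sum_mul_le_sqrt_mul_sqrt (S i) (fun _ => (1:ℝ)) (fun j => |Δ i j|)
    simp only [one_mul, one_pow] at hCS
    have hcard : Real.sqrt (∑ _j ∈ S i, (1:ℝ)) ≤ Real.sqrt s := by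
      apply Real.sqrt_le_sqrt
      rw [Finset.sum_const, nsmul_eq_mul, mul_one]
      exact_mod_cast hScard i
    have hsub : ∑ j ∈ S i, |Δ i j| ^ 2 ≤ ∑ j, Δ i j ^ 2 := by
      simp only [sq_abs]
      exact Finset.sum_le_sum_of_subset_of_nonneg (Finset.subset_univ _)
        (fun _ _ _ => sq_nonneg _)
    have hnorm : Real.sqrt (∑ j, Δ i j ^ 2) ≤ Real.sqrt (q i) / κ := by
      rw [le_div_iff₀ hκ, mul_comm, ← Real.sqrt_sq hκ.le, ← Real.sqrt_mul (sq_nonneg κ)]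
      apply Real.sqrt_le_sqrt
      calc κ ^ 2 * ∑ j, Δ i j ^ 2 ≤ (Δ i) ⬝ᵥ Chat *ᵥ (Δ i) := hre
        _ = q i := rfl
    have haI : a i ≤ Real.sqrt s * (Real.sqrt (q i) / κ) := by
      calc a i ≤ Real.sqrt (∑ _j ∈ S i, (1:ℝ)) * Real.sqrt (∑ j ∈ S i, |Δ i j| ^ 2) := hCS
        _ ≤ Real.sqrt s * Real.sqrt (∑ j, Δ i j ^ 2) := by
            apply mul_le_mul hcard (Real.sqrt_le_sqrt hsub) (Real.sqrt_nonneg _)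
              (Real.sqrt_nonneg _)
        _ ≤ Real.sqrt s * (Real.sqrt (q i) / κ) :=
            mul_le_mul_of_nonneg_left hnorm (Real.sqrt_nonneg _)
    have hdrop : lam / γ * (a i + b i) + lam * (a i - b i) ≤ (lam / γ + lam) * a i := by
      have : (lam / γ - lam) * b i ≤ 0 := by
        apply mul_nonpos_of_nonpos_of_nonneg _ (hb0 i)
        have : lam / γ ≤ lam := by
          rw [div_le_iff₀ hγ0]; nlinarith
        linarith
      nlinarith [this]
    calc lam / γ * (a i + b i) + lam * (a i - b i) ≤ (lam / γ + lam) * a i := hdrop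
      _ ≤ (lam / γ + lam) * (Real.sqrt s * (Real.sqrt (q i) / κ)) := by
          apply mul_le_mul_of_nonneg_left haI (by positivity)
      _ = c * Real.sqrt s * Real.sqrt (q i) := by
          rw [hcdef]; field_simp
  -- sum the row bounds and apply Cauchy-Schwarz over rows
  have hsumrow : Q ≤ c * Real.sqrt s * ∑ i, Real.sqrt (q i) := by
    rw [Finset.mul_sum]
    exact hmain.trans (Finset.sum_le_sum fun i _ => hrow i)
  have hCS2 : ∑ i, Real.sqrt (q i) ≤ Real.sqrt d * Real.sqrt Q := by
    have h := Real.sum_mul_le_sqrt_mul_sqrt Finset.univ (fun _ => (1:ℝ)) (fun i => Real.sqrt (q i))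
    simp only [one_mul, one_pow] at h
    calc ∑ i, Real.sqrt (q i)
        ≤ Real.sqrt (∑ _i : Fin d, (1:ℝ)) * Real.sqrt (∑ i, Real.sqrt (q i) ^ 2) := h
      _ = Real.sqrt d * Real.sqrt Q := by
          congr 1
          · congr 1
            rw [Finset.sum_const, nsmul_eq_mul, mul_one, Finset.card_univ, Fintype.card_fin]
          · congr 1
            exact Finset.sum_congr rfl fun i _ => Real.sq_sqrt (hq0 i)
  have hfin : Q ≤ (c * Real.sqrt s * Real.sqrt d) * Real.sqrt Q := by
    calc Q ≤ c * Real.sqrt s * ∑ i, Real.sqrt (q i) := hsumrow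
      _ ≤ c * Real.sqrt s * (Real.sqrt d * Real.sqrt Q) := by
          apply mul_le_mul_of_nonneg_left hCS2 (by positivity)
      _ = (c * Real.sqrt s * Real.sqrt d) * Real.sqrt Q := by ring
  have hsqrtQ : Real.sqrt Q ≤ c * Real.sqrt s * Real.sqrt d := by
    rcases eq_or_lt_of_le (Real.sqrt_nonneg Q) with h | h
    · rw [← h]; positivity
    · have hQQ : Real.sqrt Q * Real.sqrt Q ≤ (c * Real.sqrt s * Real.sqrt d) * Real.sqrt Q := by
        rw [Real.mul_self_sqrt hQ0]; exact hfin
      exact le_of_mul_le_mul_right hQQ h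
  rw [hQsum]
  calc Real.sqrt Q ≤ c * Real.sqrt s * Real.sqrt d := hsqrtQ
    _ = (1 + γ) / (γ * κ) * lam * Real.sqrt (d * s) := by
        rw [hcdef, Real.sqrt_mul (Nat.cast_nonneg d)]
        ring
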